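/- (Appendix Claim 5.) Let t ≥ 1 be an integer. For any two arrays X₁, X_{t+1} ∈ Σ_q^{n^{⊗d}}, it holds that I_{t𝟏}(X₁) ∩ I_{t𝟏}(X_{t+1}) ≠ ∅ if and only if there exist t − 1 arrays X₂, …, X_t ∈ Σ_q^{n^{⊗d}} such that I_{𝟏}(X_i) ∩ I_{𝟏}(X_{i+1}) ≠ ∅ for all 1 ≤ i ≤ t, where 𝟏 = (1, …, 1) is the all-one vector of length d. -/

import Mathlib

set_option maxHeartbeats 1600000


/-- A `q`-ary `d`-dimensional array: a size vector `size : Fin d → ℕ` together with an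
entry of the alphabet `Fin q` for every index tuple inside the box
`[size 0] × ⋯ × [size (d-1)]`. -/
structure Arr (q d : ℕ) where
  size : Fin d → ℕ
  val : ∀ x : Fin d → ℕ, (∀ i, x i < size i) → Fin q

/-- The index map associated with inserting a hyperplane at position `k` along axis `i`:
coordinates below `k` stay put, the others are shifted up by one (so that position `k`
along axis `i` is the freshly inserted hyperplane). -/
def insIdx {d : ℕ} (i : Fin d) (k : ℕ) (x : Fin d → ℕ) : Fin d → ℕ :=
  fun j => if j = i then (if x i < k then x i else x i + 1) else x j

/-- `InsertsTo i A B`: the array `B` is obtained from the array `A` by a single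
`x_i`-insertion, i.e. by inserting one `(d-1)`-dimensional hyperplane (with arbitrary
entries) orthogonal to the `x_i`-axis. -/
def InsertsTo {q d : ℕ} (i : Fin d) (A B : Arr q d) : Prop :=
  (∀ j, B.size j = if j = i then A.size j + 1 else A.size j) ∧
  ∃ k ≤ A.size i, ∀ (x : Fin d → ℕ) (hx : ∀ j, x j < A.size j)
    (hx' : ∀ j, insIdx i k x j < B.size j),
    A.val x hx = B.val (insIdx i k x) hx'

/-- `DeletesTo i A B`: the array `B` is obtained from `A` by a single `x_i`-deletion,
the inverse operation of an `x_i`-insertion. -/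
def DeletesTo {q d : ℕ} (i : Fin d) (A B : Arr q d) : Prop :=
  InsertsTo i B A

/-- `Steps R t A B`: the array `B` is obtained from the array `A` by performing, for each
axis `i`, exactly `t i` operations of type `R i` (in some order). -/
inductive Steps {q d : ℕ} (R : Fin d → Arr q d → Arr q d → Prop) :
    (Fin d → ℕ) → Arr q d → Arr q d → Prop
  | refl (A : Arr q d) : Steps R 0 A A
  | step {t : Fin d → ℕ} {A B C : Arr q d} (i : Fin d) :
      R i A B → Steps R t B C → Steps R (t + Pi.single i 1) A C

/-- The deletion ball `D_t(X)`: all arrays obtainable from `X` by a `t`-deletion,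
i.e. by `t i` `x_i`-deletions for each axis `i`. -/
def delBall {q d : ℕ} (t : Fin d → ℕ) (X : Arr q d) : Set (Arr q d) :=
  {Y | Steps DeletesTo t X Y}

/-- The insertion ball `I_t(X)`: all arrays obtainable from `X` by a `t`-insertion,
i.e. by `t i` `x_i`-insertions for each axis `i`. -/
def insBall {q d : ℕ} (t : Fin d → ℕ) (X : Arr q d) : Set (Arr q d) :=
  {Y | Steps InsertsTo t X Y}

/-- The insertion-deletion ball `ID_t(X)`: all arrays obtainable from `X` by a
`t^del`-deletion followed by a `t^ins`-insertion, for some decomposition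
`t = t^ins + t^del`. -/
def insDelBall {q d : ℕ} (t : Fin d → ℕ) (X : Arr q d) : Set (Arr q d) :=
  {Z | ∃ tins tdel : Fin d → ℕ, tins + tdel = t ∧
    ∃ W ∈ delBall tdel X, Z ∈ insBall tins W}

/-- `Σ_q^{n^{⊗d}}`: the set of `q`-ary `d`-dimensional arrays of cubic size `n × ⋯ × n`. -/
def cube (q d n : ℕ) : Set (Arr q d) := {A | A.size = fun _ => n}

/-- A code `C` is a `t`-deletion-correcting code if the deletion balls `D_t(X)`, `X ∈ C`,
are pairwise disjoint. -/
def IsDelCode {q d : ℕ} (t : Fin d → ℕ) (C : Set (Arr q d)) : Prop :=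
  ∀ X ∈ C, ∀ Y ∈ C, X ≠ Y → delBall t X ∩ delBall t Y = ∅

/-- A code `C` is a `t`-insertion-correcting code if the insertion balls `I_t(X)`,
`X ∈ C`, are pairwise disjoint. -/
def IsInsCode {q d : ℕ} (t : Fin d → ℕ) (C : Set (Arr q d)) : Prop :=
  ∀ X ∈ C, ∀ Y ∈ C, X ≠ Y → insBall t X ∩ insBall t Y = ∅

/-- A code `C` is a `t`-insdel-correcting code if the insertion-deletion balls `ID_t(X)`,
`X ∈ C`, are pairwise disjoint. -/
def IsInsDelCode {q d : ℕ} (t : Fin d → ℕ) (C : Set (Arr q d)) : Prop :=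
  ∀ X ∈ C, ∀ Y ∈ C, X ≠ Y → insDelBall t X ∩ insDelBall t Y = ∅


section Aux

variable {q d : ℕ}

theorem Arr.ext' {A B : Arr q d} (hs : ∀ i, A.size i = B.size i)
    (hv : ∀ x hxA hxB, A.val x hxA = B.val x hxB) : A = B := by
  obtain ⟨sA, vA⟩ := A
  obtain ⟨sB, vB⟩ := B
  have hss : sA = sB := funext hs
  subst hss
  simp only [Arr.mk.injEq, heq_eq_eq, true_and]
  funext x hx
  exact hv x hx hx

theorem Arr.val_congr (A : Arr q d) {x y : Fin d → ℕ} (hxy : x = y)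
    (hx : ∀ i, x i < A.size i) (hy : ∀ i, y i < A.size i) :
    A.val x hx = A.val y hy := by subst hxy; rfl

/-- `Emb t A B`: `A` embeds into `B` through coordinatewise strictly increasing index
maps, `B` having `t i` extra hyperplanes along axis `i`. -/
def Emb (t : Fin d → ℕ) (A B : Arr q d) : Prop :=
  (∀ j, B.size j = A.size j + t j) ∧
  ∃ f : Fin d → ℕ → ℕ,
    (∀ i m₁ m₂, m₁ < m₂ → m₂ < A.size i → f i m₁ < f i m₂) ∧
    (∀ i m, m < A.size i → f i m < B.size i) ∧
    (∀ (x : Fin d → ℕ) (hx : ∀ j, x j < A.size j)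
      (hx' : ∀ j, f j (x j) < B.size j),
      A.val x hx = B.val (fun j => f j (x j)) hx')

theorem emb_cast {t t' : Fin d → ℕ} {A B : Arr q d} (h : Emb t A B) (htt : t = t') :
    Emb t' A B := htt ▸ h

theorem emb_refl (A : Arr q d) : Emb 0 A A := by
  refine ⟨fun j => by simp, fun _ => id, fun i m₁ m₂ h _ => h, fun i m h => h, ?_⟩
  intro x hx hx'
  exact A.val_congr rfl hx hx'

theorem emb_comp {s t : Fin d → ℕ} {A B C : Arr q d}
    (hAB : Emb s A B) (hBC : Emb t B C) : Emb (s + t) A C := by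
  obtain ⟨hs1, f, hf1, hf2, hf3⟩ := hAB
  obtain ⟨ht1, g, hg1, hg2, hg3⟩ := hBC
  refine ⟨fun j => by rw [ht1, hs1]; simp [add_assoc], fun i m => g i (f i m),
    ?_, ?_, ?_⟩
  · intro i m₁ m₂ h hm₂
    exact hg1 i _ _ (hf1 i m₁ m₂ h hm₂) (hf2 i m₂ hm₂)
  · intro i m hm
    exact hg2 i _ (hf2 i m hm)
  · intro x hx hx'
    have hfx : ∀ j, f j (x j) < B.size j := fun j => hf2 j (x j) (hx j)
    rw [hf3 x hx hfx]
    exact hg3 _ hfx hx'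

theorem emb_of_insertsTo {i : Fin d} {A B : Arr q d} (h : InsertsTo i A B) :
    Emb (Pi.single i 1) A B := by
  obtain ⟨hs, k, hk, hval⟩ := h
  refine ⟨fun j => by rw [hs j, Pi.single_apply]; split <;> simp,
    fun j m => if j = i then (if m < k then m else m + 1) else m, ?_, ?_, ?_⟩
  · intro j m₁ m₂ hlt hm₂
    by_cases hj : j = i
    · simp only [if_pos hj]
      split <;> split <;> omega
    · simpa [hj] using hlt
  · intro j m hm
    rw [hs j]
    by_cases hj : j = i
    · simp only [if_pos hj]
      split <;> omega
    · simpa [hj] using hm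
  · intro x hx hx'
    have hfx : ∀ j, insIdx i k x j < B.size j := by
      intro j
      have := hx' j
      simp only [insIdx] at *
      by_cases hj : j = i <;> simpa [hj] using this
    rw [hval x hx hfx]
    refine B.val_congr ?_ _ _
    funext j
    simp only [insIdx]
    by_cases hj : j = i <;> simp [hj]

theorem steps_to_emb {t : Fin d → ℕ} {A B : Arr q d}
    (h : Steps InsertsTo t A B) : Emb t A B := by
  induction h with
  | refl A => exact emb_refl A
  | step i hR _ ih =>
      exact emb_cast (emb_comp (emb_of_insertsTo hR) ih) (by rw [add_comm])

theorem steps_append {R : Fin d → Arr q d → Arr q d → Prop} {t : Fin d → ℕ}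
    {A B : Arr q d} (h : Steps R t A B) {i : Fin d} {C : Arr q d} (hBC : R i B C) :
    Steps R (t + Pi.single i 1) A C := by
  induction h with
  | refl A => simpa using Steps.step i hBC (Steps.refl C)
  | step j hR _ ih =>
      have := Steps.step j hR (ih hBC)
      rwa [add_right_comm] at this

theorem emb_zero_eq {A B : Arr q d} (h : Emb 0 A B) : A = B := by
  obtain ⟨hs, f, hf1, hf2, hf3⟩ := h
  simp only [Pi.zero_apply, add_zero] at hs
  have hid : ∀ i m, m < A.size i → f i m = m := by
    intro i
    have up : ∀ m, m < A.size i → m ≤ f i m := by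
      intro m
      induction m with
      | zero => omega
      | succ p ih =>
          intro hp
          have := hf1 i p (p + 1) (by omega) hp
          have := ih (by omega)
          omega
    have down : ∀ c m, m + c + 1 = A.size i → f i m ≤ m := by
      intro c
      induction c with
      | zero =>
          intro m hm
          have := hf2 i m (by omega)
          rw [hs i] at this
          omega
      | succ p ih =>
          intro m hm
          have h1 := hf1 i m (m + 1) (by omega) (by omega)
          have h2 := ih (m + 1) (by omega)
          omega
    intro m hm
    have := up m hm
    have := down (A.size i - m - 1) m (by omega)
    omega
  refine Arr.ext' (fun i => (hs i).symm) ?_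
  intro x hxA hxB
  have hx' : ∀ j, f j (x j) < B.size j := by
    intro j; rw [hs j, hid j (x j) (hxA j)]; exact hxA j
  rw [hf3 x hxA hx']
  refine B.val_congr ?_ _ _
  funext j
  exact hid j (x j) (hxA j)

theorem emb_to_steps {t : Fin d → ℕ} {A B : Arr q d} (h : Emb t A B) :
    Steps InsertsTo t A B := by
  generalize hN : (Finset.univ.sum t) = N
  induction N generalizing t B with
  | zero =>
      have ht0 : t = 0 := by
        funext i
        have := Finset.sum_eq_zero_iff.mp hN i (Finset.mem_univ i)
        simpa using this
      subst ht0
      rw [emb_zero_eq h]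
      exact Steps.refl B
  | succ N ih =>
      have hex : ∃ i, t i ≠ 0 := by
        by_contra hc
        push_neg at hc
        have : Finset.univ.sum t = 0 := Finset.sum_eq_zero fun i _ => hc i
        omega
      obtain ⟨i, hi⟩ := hex
      obtain ⟨hs, f, hf1, hf2, hf3⟩ := h
      have hBi : 1 ≤ B.size i := by have := hs i; omega
      -- find a position k along axis i missed by the image of f i
      have hcard : ∃ k, k < B.size i ∧ ∀ m, m < A.size i → f i m ≠ k := by
        by_contra hc
        push_neg at hc
        have hsub : Finset.range (B.size i) ⊆
            (Finset.range (A.size i)).image (f i) := by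
          intro k hk
          rw [Finset.mem_range] at hk
          obtain ⟨m, hm, hfm⟩ := hc k hk
          exact Finset.mem_image.mpr ⟨m, Finset.mem_range.mpr hm, hfm⟩
        have h1 := Finset.card_le_card hsub
        have h2 := Finset.card_image_le (s := Finset.range (A.size i)) (f := f i)
        simp only [Finset.card_range] at h1 h2
        rw [hs i] at h1
        omega
      obtain ⟨k, hkB, hknot⟩ := hcard
      -- B' : B with hyperplane k along axis i deleted
      have hB' : ∃ B' : Arr q d,
          (∀ j, B'.size j = if j = i then B.size i - 1 else B.size j) ∧
          (∀ (y : Fin d → ℕ) (hy : ∀ j, y j < B'.size j)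
            (hy' : ∀ j, insIdx i k y j < B.size j),
            B'.val y hy = B.val (insIdx i k y) hy') := by
        refine ⟨⟨fun j => if j = i then B.size i - 1 else B.size j,
          fun y hy => B.val (insIdx i k y) ?_⟩, fun j => rfl, ?_⟩
        · intro j
          have hyj := hy j
          simp only [insIdx]
          by_cases hj : j = i
          · subst hj
            simp only [if_pos rfl, if_true] at hyj ⊢
            split <;> omega
          · simp only [if_neg hj] at hyj ⊢
            exact hyj
        · intro y hy hy'
          exact B.val_congr rfl _ _
      obtain ⟨B', hsizeB', hvalB'⟩ := hB'
      have hins : InsertsTo i B' B := by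
        refine ⟨fun j => ?_, k, ?_, ?_⟩
        · rw [hsizeB' j]
          by_cases hj : j = i
          · subst hj
            simp only [if_pos rfl, if_true]
            omega
          · simp only [if_neg hj]
        · rw [hsizeB' i, if_pos rfl]; omega
        · intro y hy hy'
          exact hvalB' y hy hy'
      have htt : t = (fun j => if j = i then t i - 1 else t j) + Pi.single i 1 := by
        funext j
        simp only [Pi.add_apply, Pi.single_apply]
        by_cases hj : j = i
        · subst hj; simp only [if_pos rfl, if_true]; omega
        · simp only [if_neg hj]; omega
      have hemb' : Emb (fun j => if j = i then t i - 1 else t j) A B' := by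
        refine ⟨fun j => ?_, fun j m => if j = i then
            (if f i m < k then f i m else f i m - 1) else f j m, ?_, ?_, ?_⟩
        · rw [hsizeB' j]
          by_cases hj : j = i
          · subst hj
            simp only [if_pos rfl, if_true]
            have := hs j
            omega
          · simp only [if_neg hj]
            exact hs j
        · intro j m₁ m₂ hlt hm₂
          by_cases hj : j = i
          · subst hj
            have h1 := hf1 j m₁ m₂ hlt hm₂
            have h2 := hknot m₁ (by omega)
            have h3 := hknot m₂ hm₂
            simp only [if_pos rfl, if_true]
            split <;> split <;> omega
          · simp only [if_neg hj]
            exact hf1 j m₁ m₂ hlt hm₂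
        · intro j m hm
          rw [hsizeB' j]
          by_cases hj : j = i
          · subst hj
            have h1 := hf2 j m hm
            have h2 := hknot m hm
            simp only [if_pos rfl, if_true]
            split <;> omega
          · simp only [if_neg hj]
            exact hf2 j m hm
        · intro x hx hx'
          have hfx : ∀ j, f j (x j) < B.size j := fun j => hf2 j (x j) (hx j)
          have hxiK : ∀ j, insIdx i k (fun j' => if j' = i then
              (if f i (x j') < k then f i (x j') else f i (x j') - 1) else f j' (x j')) j
              < B.size j := by
            intro j
            simp only [insIdx]
            by_cases hj : j = i
            · subst hj
              simp only [if_pos rfl, if_true]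
              have h1 := hf2 j (x j) (hx j)
              have h2 := hknot (x j) (hx j)
              split <;> (try split) <;> omega
            · simp only [if_neg hj]
              exact hf2 j (x j) (hx j)
          rw [hf3 x hx hfx, hvalB' _ _ hxiK]
          refine B.val_congr ?_ _ _
          funext j
          simp only [insIdx]
          by_cases hj : j = i
          · subst hj
            simp only [if_pos rfl, if_true]
            have h2 := hknot (x j) (hx j)
            by_cases hlt : f j (x j) < k
            · rw [if_pos hlt, if_pos hlt]
            · rw [if_neg hlt, if_neg (by omega)]
              omega
          · simp only [if_neg hj]
      have hsum' : Finset.univ.sum (fun j => if j = i then t i - 1 else t j) = N := by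
        have h1 : Finset.univ.sum t = Finset.univ.sum
            (fun j => (if j = i then t i - 1 else t j) + (if j = i then 1 else 0)) :=
          Finset.sum_congr rfl (fun j _ => by
            by_cases hj : j = i
            · subst hj; simp only [if_pos rfl, if_true]; omega
            · simp [hj])
        rw [h1, Finset.sum_add_distrib] at hN
        have h2 : (Finset.univ.sum fun j => if j = i then 1 else 0) = 1 := by
          simp
        omega
      rw [htt]
      exact steps_append (ih hemb' hsum') hins

/-- `m`-th smallest element of a finite set of naturals. -/
def enumF (U : Finset ℕ) (m : ℕ) : ℕ := (U.sort (·≤·)).getD m 0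

/-- index of an element in the sorted enumeration. -/
def indexF (U : Finset ℕ) (v : ℕ) : ℕ := (U.sort (·≤·)).idxOf v

theorem enumF_mem {U : Finset ℕ} {m : ℕ} (hm : m < U.card) : enumF U m ∈ U := by
  have hlen : m < (U.sort (·≤·)).length := by rwa [Finset.length_sort]
  rw [enumF, List.getD_eq_get (i := ⟨m, hlen⟩)]
  rw [← Finset.mem_sort (α := ℕ) (·≤·)]
  exact List.get_mem _ _

theorem enumF_strictMono {U : Finset ℕ} {m₁ m₂ : ℕ} (h : m₁ < m₂) (hm : m₂ < U.card) :
    enumF U m₁ < enumF U m₂ := by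
  have hlen2 : m₂ < (U.sort (·≤·)).length := by rwa [Finset.length_sort]
  have hlen1 : m₁ < (U.sort (·≤·)).length := by omega
  rw [enumF, enumF, List.getD_eq_get (i := ⟨m₁, hlen1⟩), List.getD_eq_get (i := ⟨m₂, hlen2⟩)]
  exact (Finset.sortedLT_sort U) (show (⟨m₁, hlen1⟩ : Fin _) < ⟨m₂, hlen2⟩ from h)

theorem indexF_lt {U : Finset ℕ} {v : ℕ} (hv : v ∈ U) : indexF U v < U.card := by
  rw [indexF, ← Finset.length_sort (α := ℕ) (·≤·)]
  rw [List.idxOf_lt_length_iff]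
  rwa [Finset.mem_sort]

theorem enumF_indexF {U : Finset ℕ} {v : ℕ} (hv : v ∈ U) :
    enumF U (indexF U v) = v := by
  have h : indexF U v < (U.sort (·≤·)).length := by
    rw [indexF, List.idxOf_lt_length_iff]; rwa [Finset.mem_sort]
  rw [enumF, List.getD_eq_get (i := ⟨_, h⟩)]
  exact List.idxOf_get h

theorem indexF_strictMono {U : Finset ℕ} {v w : ℕ} (hvw : v < w) (hv : v ∈ U)
    (hw : w ∈ U) : indexF U v < indexF U w := by
  rcases lt_trichotomy (indexF U v) (indexF U w) with h | h | h
  · exact h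
  · exfalso
    have := enumF_indexF hv
    rw [h, enumF_indexF hw] at this
    omega
  · exfalso
    have := enumF_strictMono h (indexF_lt hv)
    rw [enumF_indexF hv, enumF_indexF hw] at this
    omega

/-- Restriction of an array to a set of hyperplane positions along each axis. -/
def restrict (hq0 : 0 < q) (Z : Arr q d) (S : Fin d → Finset ℕ) : Arr q d :=
  ⟨fun i => (S i).card,
   fun x _ => if h : ∀ i, enumF (S i) (x i) < Z.size i then
      Z.val (fun i => enumF (S i) (x i)) h else ⟨0, hq0⟩⟩

theorem restrict_size (hq0 : 0 < q) (Z : Arr q d) (S : Fin d → Finset ℕ) (i : Fin d) :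
    (restrict hq0 Z S).size i = (S i).card := rfl

theorem restrict_val (hq0 : 0 < q) (Z : Arr q d) {S : Fin d → Finset ℕ}
    (x : Fin d → ℕ) (hx : ∀ i, x i < (restrict hq0 Z S).size i)
    (h' : ∀ i, enumF (S i) (x i) < Z.size i) :
    (restrict hq0 Z S).val x hx = Z.val (fun i => enumF (S i) (x i)) h' := by
  show dite _ _ _ = _
  rw [dif_pos h']

theorem enumF_lt_of_subset_range {U : Finset ℕ} {N m : ℕ}
    (hU : U ⊆ Finset.range N) (hm : m < U.card) : enumF U m < N := by
  have := hU (enumF_mem hm)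
  rwa [Finset.mem_range] at this

/-- Main embedding lemma into a restriction: if `X` embeds into `Z` through maps whose
values along axis `i` lie in `U i`, then `X` embeds into `restrict Z U`. -/
theorem emb_into_restrict (hq0 : 0 < q) {Z X : Arr q d} {U : Fin d → Finset ℕ}
    (hU : ∀ i, U i ⊆ Finset.range (Z.size i)) {t : Fin d → ℕ}
    (hcard : ∀ i, (U i).card = X.size i + t i) {f : Fin d → ℕ → ℕ}
    (hf1 : ∀ i m₁ m₂, m₁ < m₂ → m₂ < X.size i → f i m₁ < f i m₂)
    (hmem : ∀ i m, m < X.size i → f i m ∈ U i)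
    (hval : ∀ (x : Fin d → ℕ) (hx : ∀ j, x j < X.size j)
      (h' : ∀ j, f j (x j) < Z.size j),
      X.val x hx = Z.val (fun j => f j (x j)) h') :
    Emb t X (restrict hq0 Z U) := by
  refine ⟨fun j => by rw [restrict_size, hcard j],
    fun i m => indexF (U i) (f i m), ?_, ?_, ?_⟩
  · intro i m₁ m₂ h hm₂
    exact indexF_strictMono (hf1 i m₁ m₂ h hm₂) (hmem i m₁ (by omega)) (hmem i m₂ hm₂)
  · intro i m hm
    rw [restrict_size]
    exact indexF_lt (hmem i m hm)
  · intro x hx hx'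
    have hmemx : ∀ j, f j (x j) ∈ U j := fun j => hmem j (x j) (hx j)
    have hfZ : ∀ j, f j (x j) < Z.size j := by
      intro j
      have := hU j (hmemx j)
      rwa [Finset.mem_range] at this
    have henum : ∀ j, enumF (U j) (indexF (U j) (f j (x j))) < Z.size j := by
      intro j
      rw [enumF_indexF (hmemx j)]
      exact hfZ j
    rw [restrict_val hq0 Z _ _ henum, hval x hx hfZ]
    refine Z.val_congr ?_ _ _
    funext j
    exact (enumF_indexF (hmemx j)).symm

/-- The restriction itself embeds in the ambient array via `enumF`. -/
theorem restrict_emb_data (hq0 : 0 < q) (Z : Arr q d) {S : Fin d → Finset ℕ}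
    (hS : ∀ i, S i ⊆ Finset.range (Z.size i)) :
    ∀ (x : Fin d → ℕ) (hx : ∀ j, x j < (restrict hq0 Z S).size j)
      (h' : ∀ j, enumF (S j) (x j) < Z.size j),
      (restrict hq0 Z S).val x hx = Z.val (fun j => enumF (S j) (x j)) h' :=
  fun x hx h' => restrict_val hq0 Z x hx h'

/-- Pushing a single insertion through an embedding: if `Y` embeds into `Zl` and `B` is a
one-hyperplane insertion of `Y`, then some one-hyperplane insertion `Zl'` of `Zl`
accommodates an embedding of `B`. -/
theorem merge_one (hq0 : 0 < q) {a : Fin d → ℕ} {Y Zl B : Arr q d} {i : Fin d}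
    (hYZ : Emb a Y Zl) (hYB : InsertsTo i Y B) :
    ∃ Zl', InsertsTo i Zl Zl' ∧ Emb a B Zl' := by
  classical
  obtain ⟨hs, f, hf1, hf2, hf3⟩ := hYZ
  obtain ⟨hsB, k, hk, hvalB⟩ := hYB
  have hBsi : B.size i = Y.size i + 1 := by
    have := hsB i; rwa [if_pos rfl] at this
  have hBsj : ∀ j, j ≠ i → B.size j = Y.size j := by
    intro j hj; have := hsB j; rwa [if_neg hj] at this
  have finj : ∀ j m m', m < Y.size j → m' < Y.size j → f j m = f j m' → m = m' := by
    intro j m m' hm hm' heq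
    rcases lt_trichotomy m m' with h | h | h
    · have := hf1 j m m' h hm'; omega
    · exact h
    · have := hf1 j m' m h hm; omega
  obtain ⟨pinv, hpinv2⟩ : ∃ pinv : Fin d → ℕ → ℕ, ∀ j v,
      (∃ m, m < Y.size j ∧ f j m = v) → pinv j v < Y.size j ∧ f j (pinv j v) = v := by
    refine ⟨fun j v => if h : ∃ m, m < Y.size j ∧ f j m = v then h.choose else 0,
      fun j v hex => ?_⟩
    simp only
    rw [dif_pos hex]
    exact hex.choose_spec
  have hpinv1 : ∀ j m, m < Y.size j → pinv j (f j m) = m := by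
    intro j m hm
    have hex : ∃ m', m' < Y.size j ∧ f j m' = f j m := ⟨m, hm, rfl⟩
    have := hpinv2 j (f j m) hex
    exact finj j _ m this.1 hm this.2
  obtain ⟨k', hk'le, hflt, hfge⟩ : ∃ k', k' ≤ Zl.size i ∧
      (∀ m, m < k → f i m < k') ∧ (∀ m, k ≤ m → m < Y.size i → k' ≤ f i m) := by
    by_cases hkY : k < Y.size i
    · refine ⟨f i k, le_of_lt (hf2 i k hkY), fun m hm => hf1 i m k hm hkY,
        fun m h1 h2 => ?_⟩
      rcases eq_or_lt_of_le h1 with h' | h'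
      · subst h'; exact le_refl _
      · exact le_of_lt (hf1 i k m h' h2)
    · exact ⟨Zl.size i, le_refl _, fun m hm => hf2 i m (by omega),
        fun m h1 h2 => by omega⟩
  set Zl' : Arr q d := ⟨fun j => if j = i then Zl.size j + 1 else Zl.size j,
    fun z hz =>
      if hcc : (z i = k' ∧ ∀ j, j ≠ i → ∃ m, m < Y.size j ∧ f j m = z j) ∧
          (∀ j, (if j = i then k else pinv j (z j)) < B.size j) then
        B.val (fun j => if j = i then k else pinv j (z j)) hcc.2
      else if hdd : (¬ z i = k') ∧
          (∀ j, (if j = i then (if z i < k' then z i else z i - 1) else z j)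
            < Zl.size j) then
        Zl.val (fun j => if j = i then (if z i < k' then z i else z i - 1) else z j)
          hdd.2
      else ⟨0, hq0⟩⟩ with hZl'def
  have hZsize : ∀ j, Zl'.size j = if j = i then Zl.size j + 1 else Zl.size j :=
    fun j => rfl
  have hval_new : ∀ z hz, z i = k' →
      (∀ j, j ≠ i → ∃ m, m < Y.size j ∧ f j m = z j) →
      ∀ (h3 : ∀ j, (if j = i then k else pinv j (z j)) < B.size j),
      Zl'.val z hz = B.val (fun j => if j = i then k else pinv j (z j)) h3 := by
    intro z hz h1 h2 h3
    show dite _ _ _ = _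
    rw [dif_pos ⟨⟨h1, h2⟩, h3⟩]
  have hval_old : ∀ z hz, ¬ z i = k' →
      ∀ (h3 : ∀ j, (if j = i then (if z i < k' then z i else z i - 1) else z j)
        < Zl.size j),
      Zl'.val z hz = Zl.val
        (fun j => if j = i then (if z i < k' then z i else z i - 1) else z j) h3 := by
    intro z hz h1 h3
    show dite _ _ _ = _
    rw [dif_neg (fun hcc => h1 hcc.1.1), dif_pos ⟨h1, h3⟩]
  refine ⟨Zl', ⟨fun j => hZsize j, k', hk'le, ?_⟩, ?_⟩
  · -- InsertsTo i Zl Zl'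
    intro x hx hx'
    have hne : ¬ insIdx i k' x i = k' := by
      simp only [insIdx, if_pos rfl, if_true]
      by_cases hlt : x i < k'
      · rw [if_pos hlt]; omega
      · rw [if_neg hlt]; omega
    have h3 : ∀ j, (if j = i then
        (if insIdx i k' x i < k' then insIdx i k' x i else insIdx i k' x i - 1)
        else insIdx i k' x j) < Zl.size j := by
      intro j
      by_cases hj : j = i
      · subst hj
        simp only [insIdx, if_pos rfl, if_true]
        have hxj := hx j
        by_cases hlt : x j < k'
        · rw [if_pos hlt, if_pos hlt]; omega
        · rw [if_neg hlt, if_neg (by omega)]; omega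
      · simp only [insIdx, if_neg hj]
        exact hx j
    rw [hval_old _ _ hne h3]
    refine Zl.val_congr ?_ _ _
    funext j
    by_cases hj : j = i
    · subst hj
      simp only [insIdx, if_pos rfl, if_true]
      by_cases hlt : x j < k'
      · rw [if_pos hlt, if_pos hlt]
      · rw [if_neg hlt, if_neg (by omega)]
        omega
    · simp only [insIdx, if_neg hj]
  · -- Emb a B Zl'
    refine ⟨fun j => ?_, fun j m => if j = i then
        (if m < k then f i m else if m = k then k' else f i (m - 1) + 1)
        else f j m, ?_, ?_, ?_⟩
    · rw [hZsize j]
      by_cases hj : j = i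
      · subst hj
        rw [if_pos rfl, hBsi, hs j]
        omega
      · rw [if_neg hj, hBsj j hj, hs j]
    · intro j m₁ m₂ hlt hm₂
      by_cases hj : j = i
      · subst hj
        simp only [if_pos rfl, if_true]
        have hm₂Y : m₂ ≤ Y.size j := by rw [hBsi] at hm₂; omega
        by_cases h2a : m₂ < k
        · rw [if_pos (show m₁ < k by omega), if_pos h2a]
          exact hf1 j m₁ m₂ hlt (by omega)
        · by_cases h2b : m₂ = k
          · rw [if_pos (by omega), if_neg h2a, if_pos h2b]
            exact hflt m₁ (by omega)
          · rw [if_neg h2a, if_neg h2b]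
            have hm2' : m₂ - 1 < Y.size j := by omega
            have hge := hfge (m₂ - 1) (by omega) hm2'
            by_cases h1a : m₁ < k
            · rw [if_pos h1a]
              have := hflt m₁ h1a
              omega
            · by_cases h1b : m₁ = k
              · rw [if_neg h1a, if_pos h1b]
                omega
              · rw [if_neg h1a, if_neg h1b]
                have := hf1 j (m₁ - 1) (m₂ - 1) (by omega) hm2'
                omega
      · simp only [if_neg hj]
        have hm₂' : m₂ < Y.size j := by rw [hBsj j hj] at hm₂; exact hm₂
        exact hf1 j m₁ m₂ hlt hm₂'
    · intro j m hm
      rw [hZsize j]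
      by_cases hj : j = i
      · subst hj
        simp only [if_pos rfl, if_true]
        rw [hBsi] at hm
        by_cases h1a : m < k
        · rw [if_pos h1a]
          have := hf2 j m (by omega)
          omega
        · by_cases h1b : m = k
          · rw [if_neg h1a, if_pos h1b]
            omega
          · rw [if_neg h1a, if_neg h1b]
            have := hf2 j (m - 1) (by omega)
            omega
      · simp only [if_neg hj]
        have hm' : m < Y.size j := by rw [hBsj j hj] at hm; exact hm
        exact hf2 j m hm'
    · intro x hx hx'
      have hBx : ∀ j, j ≠ i → x j < Y.size j := by
        intro j hj
        have := hx j
        rwa [hBsj j hj] at this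
      have hxiB : x i < Y.size i + 1 := by
        have := hx i
        rwa [hBsi] at this
      by_cases hxi : x i = k
      · -- the index hits the freshly inserted hyperplane
        have h1 : (if (i : Fin d) = i then
            (if x i < k then f i (x i) else if x i = k then k' else f i (x i - 1) + 1)
            else f i (x i)) = k' := by
          rw [if_pos rfl, if_neg (by omega), if_pos hxi]
        have h2 : ∀ j, j ≠ i → ∃ m, m < Y.size j ∧ f j m =
            (if j = i then
              (if x j < k then f i (x j) else if x j = k then k' else f i (x j - 1) + 1)
              else f j (x j)) := by
          intro j hj
          exact ⟨x j, hBx j hj, by rw [if_neg hj]⟩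
        have h3 : ∀ j, (if j = i then k else pinv j
            (if j = i then
              (if x j < k then f i (x j) else if x j = k then k' else f i (x j - 1) + 1)
              else f j (x j))) < B.size j := by
          intro j
          by_cases hj : j = i
          · subst hj
            rw [if_pos rfl, hBsi]
            omega
          · rw [if_neg hj, if_neg hj, hBsj j hj]
            exact (hpinv2 j _ ⟨x j, hBx j hj, rfl⟩).1
        rw [hval_new _ hx' h1 h2 h3]
        refine B.val_congr ?_ _ _
        funext j
        beta_reduce
        by_cases hj : j = i
        · subst hj
          rw [if_pos rfl]
          exact hxi
        · rw [if_neg hj, if_neg hj]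
          exact (hpinv1 j (x j) (hBx j hj)).symm
      · -- the index comes from the original array
        rcases Nat.lt_or_ge (x i) k with hlt | hge
        · -- below the insertion point
          have hyY : ∀ j, x j < Y.size j := by
            intro j
            by_cases hj : j = i
            · subst hj; omega
            · exact hBx j hj
          have hins : insIdx i k x = x := by
            funext j
            simp only [insIdx]
            by_cases hj : j = i
            · subst hj
              rw [if_pos rfl, if_pos hlt]
            · rw [if_neg hj]
          have h'' : ∀ j, insIdx i k x j < B.size j := by
            intro j
            rw [congrFun hins j]
            exact hx j
          have e1 : B.val x hx = Y.val x hyY :=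
            ((hvalB x hyY h'').trans (B.val_congr hins _ _)).symm
          have hzb : ∀ j, f j (x j) < Zl.size j := fun j => hf2 j (x j) (hyY j)
          have e2 : Y.val x hyY = Zl.val (fun j => f j (x j)) hzb := hf3 x hyY hzb
          have h1 : ¬ (if (i : Fin d) = i then
              (if x i < k then f i (x i) else if x i = k then k' else f i (x i - 1) + 1)
              else f i (x i)) = k' := by
            rw [if_pos rfl, if_pos hlt]
            have := hflt (x i) hlt
            omega
          rw [hval_old _ hx' h1 (by
            intro j
            by_cases hj : j = i
            · subst hj
              simp only [if_pos rfl, if_true]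
              rw [if_pos hlt, if_pos (hflt (x j) hlt)]
              exact hf2 j (x j) (hyY j)
            · simp only [if_neg hj]
              exact hf2 j (x j) (hyY j))]
          refine e1.trans (e2.trans (Zl.val_congr ?_ _ _))
          funext j
          beta_reduce
          by_cases hj : j = i
          · subst hj
            simp only [if_pos rfl, if_true]
            rw [if_pos hlt, if_pos (hflt (x j) hlt)]
          · rw [if_neg hj, if_neg hj]
        · -- above the insertion point
          have hgt : k < x i := by omega
          have hyY : ∀ j, (if j = i then x i - 1 else x j) < Y.size j := by
            intro j
            by_cases hj : j = i
            · subst hj; rw [if_pos rfl]; omega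
            · rw [if_neg hj]; exact hBx j hj
          have hins : insIdx i k (fun j => if j = i then x i - 1 else x j) = x := by
            funext j
            simp only [insIdx]
            by_cases hj : j = i
            · subst hj
              simp only [if_pos rfl, if_true]
              rw [if_neg (by omega)]
              omega
            · rw [if_neg hj, if_neg hj]
          have h'' : ∀ j, insIdx i k (fun j => if j = i then x i - 1 else x j) j
              < B.size j := by
            intro j
            rw [congrFun hins j]
            exact hx j
          have e1 : B.val x hx = Y.val (fun j => if j = i then x i - 1 else x j) hyY :=
            ((hvalB _ hyY h'').trans (B.val_congr hins _ _)).symm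
          have hzb : ∀ j, f j (if j = i then x i - 1 else x j) < Zl.size j :=
            fun j => hf2 j _ (hyY j)
          have e2 : Y.val (fun j => if j = i then x i - 1 else x j) hyY
              = Zl.val (fun j => f j (if j = i then x i - 1 else x j)) hzb :=
            hf3 _ hyY hzb
          have hfge' : k' ≤ f i (x i - 1) := hfge (x i - 1) (by omega) (by omega)
          have h1 : ¬ (if (i : Fin d) = i then
              (if x i < k then f i (x i) else if x i = k then k' else f i (x i - 1) + 1)
              else f i (x i)) = k' := by
            rw [if_pos rfl, if_neg (by omega), if_neg hxi]
            omega
          rw [hval_old _ hx' h1 (by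
            intro j
            by_cases hj : j = i
            · subst hj
              simp only [if_pos rfl, if_true]
              rw [if_neg (show ¬ x j < k by omega), if_neg hxi,
                if_neg (show ¬ f j (x j - 1) + 1 < k' by omega)]
              have := hf2 j (x j - 1) (by omega)
              omega
            · simp only [if_neg hj]
              exact hf2 j (x j) (hBx j hj))]
          refine e1.trans (e2.trans (Zl.val_congr ?_ _ _))
          funext j
          beta_reduce
          by_cases hj : j = i
          · subst hj
            simp only [if_pos rfl, if_true]
            rw [if_neg (show ¬ x j < k by omega), if_neg hxi,
              if_neg (show ¬ f j (x j - 1) + 1 < k' by omega)]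
            omega
          · rw [if_neg hj, if_neg hj, if_neg hj]

/-- Merging: an embedding of `Y` into `Zl` can be carried along any insertion history
out of `Y`. -/
theorem merge (hq0 : 0 < q) {b : Fin d → ℕ} {Y Zr : Arr q d}
    (h : Steps InsertsTo b Y Zr) :
    ∀ {a : Fin d → ℕ} {Zl : Arr q d}, Emb a Y Zl →
    ∃ V, Steps InsertsTo b Zl V ∧ Emb a Zr V := by
  induction h with
  | refl A =>
      intro a Zl hE
      exact ⟨Zl, Steps.refl Zl, hE⟩
  | step i hR _ ih =>
      intro a Zl hE
      obtain ⟨Zl', h1, h2⟩ := merge_one hq0 hE hR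
      obtain ⟨V, h3, h4⟩ := ih h2
      exact ⟨V, Steps.step i h1 h3, h4⟩

/-- Two arrays embedding into a common array with `t` extra hyperplanes per axis are
connected by a chain of arrays in which consecutive members share a common
one-insertion-per-axis superarray. -/
theorem chain_of_common (hq0 : 0 < q) :
    ∀ (t n : ℕ) (X Y Z : Arr q d), X.size = (fun _ => n) → Y.size = (fun _ => n) →
    Emb (fun _ => t) X Z → Emb (fun _ => t) Y Z →
    ∃ C : ℕ → Arr q d, C 1 = X ∧ C (t + 1) = Y ∧
      (∀ i, 2 ≤ i → i ≤ t → (C i).size = fun _ => n) ∧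
      (∀ i, 1 ≤ i → i ≤ t → ∃ W, Steps InsertsTo (fun _ => 1) (C i) W ∧
        Steps InsertsTo (fun _ => 1) (C (i + 1)) W) := by
  intro t
  induction t with
  | zero =>
      intro n X Y Z hX hY hXZ hYZ
      have h1 : X = Z := emb_zero_eq (emb_cast hXZ (by funext j; rfl))
      have h2 : Y = Z := emb_zero_eq (emb_cast hYZ (by funext j; rfl))
      refine ⟨fun _ => X, rfl, by rw [h1, h2], ?_, ?_⟩
      · intro i h2' h0; omega
      · intro i h1' h0; omega
  | succ t ih =>
      intro n X Y Z hX hY hXZ hYZ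
      obtain ⟨hsX, f, hf1, hf2, hf3⟩ := hXZ
      obtain ⟨hsY, g, hg1, hg2, hg3⟩ := hYZ
      have hXn : ∀ i, X.size i = n := fun i => congrFun hX i
      have hYn : ∀ i, Y.size i = n := fun i => congrFun hY i
      have hZn : ∀ i, Z.size i = n + (t + 1) := fun i => by
        rw [hsX i, hXn i]
      -- images of the two embeddings
      set Fr : Fin d → Finset ℕ := fun i => (Finset.range n).image (f i) with hFrdef
      set Gr : Fin d → Finset ℕ := fun i => (Finset.range n).image (g i) with hGrdef
      have hFrmem : ∀ i m, m < n → f i m ∈ Fr i := by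
        intro i m hm
        exact Finset.mem_image.mpr ⟨m, Finset.mem_range.mpr hm, rfl⟩
      have hGrmem : ∀ i m, m < n → g i m ∈ Gr i := by
        intro i m hm
        exact Finset.mem_image.mpr ⟨m, Finset.mem_range.mpr hm, rfl⟩
      have hFrcard : ∀ i, (Fr i).card = n := by
        intro i
        simp only [hFrdef]
        rw [Finset.card_image_of_injOn, Finset.card_range]
        intro m₁ h₁ m₂ h₂ heq
        rw [Finset.coe_range, Set.mem_Iio] at h₁ h₂
        rcases lt_trichotomy m₁ m₂ with h | h | h
        · have := hf1 i m₁ m₂ h (by rw [hXn i]; omega)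
          omega
        · exact h
        · have := hf1 i m₂ m₁ h (by rw [hXn i]; omega)
          omega
      have hGrcard : ∀ i, (Gr i).card = n := by
        intro i
        simp only [hGrdef]
        rw [Finset.card_image_of_injOn, Finset.card_range]
        intro m₁ h₁ m₂ h₂ heq
        rw [Finset.coe_range, Set.mem_Iio] at h₁ h₂
        rcases lt_trichotomy m₁ m₂ with h | h | h
        · have := hg1 i m₁ m₂ h (by rw [hYn i]; omega)
          omega
        · exact h
        · have := hg1 i m₂ m₁ h (by rw [hYn i]; omega)
          omega
      have hFrsub : ∀ i, Fr i ⊆ Finset.range (Z.size i) := by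
        intro i v hv
        simp only [hFrdef] at hv
        obtain ⟨m, hm, rfl⟩ := Finset.mem_image.mp hv
        rw [Finset.mem_range] at hm
        exact Finset.mem_range.mpr (hf2 i m (by rw [hXn i]; omega))
      have hGrsub : ∀ i, Gr i ⊆ Finset.range (Z.size i) := by
        intro i v hv
        simp only [hGrdef] at hv
        obtain ⟨m, hm, rfl⟩ := Finset.mem_image.mp hv
        rw [Finset.mem_range] at hm
        exact Finset.mem_range.mpr (hg2 i m (by rw [hYn i]; omega))
      -- a hyperplane of Z missed by the image of g
      have hcex : ∀ i, ∃ c, c < Z.size i ∧ c ∉ Gr i := by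
        intro i
        by_contra hc
        push_neg at hc
        have hsub : Finset.range (Z.size i) ⊆ Gr i := by
          intro v hv
          exact hc v (Finset.mem_range.mp hv)
        have := Finset.card_le_card hsub
        rw [Finset.card_range, hGrcard i, hZn i] at this
        omega
      choose c hc1 hc2 using hcex
      -- auxiliary element for the swap
      have heex : ∀ i, ∃ e, e ∉ Fr i ∧ e < Z.size i ∧
          (c i ∈ Fr i → e ∈ Gr i ∧ e ≠ c i) := by
        intro i
        by_cases hci : c i ∈ Fr i
        · have hnsub : ¬ Gr i ⊆ Fr i := by
            intro hsub
            have := Finset.eq_of_subset_of_card_le hsub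
              (by rw [hFrcard i, hGrcard i])
            rw [← this] at hci
            exact hc2 i hci
          obtain ⟨b, hb1, hb2⟩ := Finset.not_subset.mp hnsub
          refine ⟨b, hb2, ?_, fun _ => ⟨hb1, fun hbc => hc2 i (hbc ▸ hb1)⟩⟩
          have := hGrsub i hb1
          rwa [Finset.mem_range] at this
        · exact ⟨c i, hci, hc1 i, fun h => absurd h hci⟩
      choose e he1 he2 he3 using heex
      -- the swapped index set, the one-bigger umbrella set and Z with c deleted
      set Hset : Fin d → Finset ℕ := fun i =>
        if c i ∈ Fr i then insert (e i) ((Fr i).erase (c i)) else Fr i with hHdef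
      set U : Fin d → Finset ℕ := fun i => insert (e i) (Fr i) with hUdef
      set Eset : Fin d → Finset ℕ := fun i =>
        (Finset.range (Z.size i)).erase (c i) with hEdef
      have hHcard : ∀ i, (Hset i).card = n := by
        intro i
        simp only [hHdef]
        by_cases hci : c i ∈ Fr i
        · rw [if_pos hci, Finset.card_insert_of_notMem
            (fun h => (he1 i) (Finset.mem_of_mem_erase h)),
            Finset.card_erase_of_mem hci, hFrcard i]
          have : 1 ≤ n := by
            have := Finset.card_pos.mpr ⟨c i, hci⟩
            rw [hFrcard i] at this
            omega
          omega
        · rw [if_neg hci, hFrcard i]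
      have hUcard : ∀ i, (U i).card = n + 1 := by
        intro i
        simp only [hUdef]
        rw [Finset.card_insert_of_notMem (he1 i), hFrcard i]
      have hUsub : ∀ i, U i ⊆ Finset.range (Z.size i) := by
        intro i v hv
        simp only [hUdef] at hv
        rcases Finset.mem_insert.mp hv with h | h
        · subst h; exact Finset.mem_range.mpr (he2 i)
        · exact hFrsub i h
      have hHsubU : ∀ i, Hset i ⊆ U i := by
        intro i v hv
        simp only [hHdef] at hv
        simp only [hUdef]
        by_cases hci : c i ∈ Fr i
        · rw [if_pos hci] at hv
          rcases Finset.mem_insert.mp hv with h | h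
          · exact Finset.mem_insert.mpr (Or.inl h)
          · exact Finset.mem_insert.mpr (Or.inr (Finset.mem_of_mem_erase h))
        · rw [if_neg hci] at hv
          exact Finset.mem_insert.mpr (Or.inr hv)
      have hHnoc : ∀ i, c i ∉ Hset i := by
        intro i hv
        simp only [hHdef] at hv
        by_cases hci : c i ∈ Fr i
        · rw [if_pos hci] at hv
          rcases Finset.mem_insert.mp hv with h | h
          · exact (he3 i hci).2 h.symm
          · exact (Finset.notMem_erase _ _) h
        · rw [if_neg hci] at hv
          exact hci hv
      have hHsubE : ∀ i, Hset i ⊆ Eset i := by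
        intro i v hv
        simp only [hEdef]
        refine Finset.mem_erase.mpr ⟨fun h => hHnoc i (h ▸ hv), ?_⟩
        exact hUsub i (hHsubU i hv)
      have hGsubE : ∀ i, Gr i ⊆ Eset i := by
        intro i v hv
        simp only [hEdef]
        exact Finset.mem_erase.mpr ⟨fun h => hc2 i (h ▸ hv), hGrsub i hv⟩
      have hEsub : ∀ i, Eset i ⊆ Finset.range (Z.size i) := by
        intro i
        simp only [hEdef]
        exact Finset.erase_subset _ _
      have hEcard : ∀ i, (Eset i).card = n + t := by
        intro i
        simp only [hEdef]
        rw [Finset.card_erase_of_mem (Finset.mem_range.mpr (hc1 i)),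
          Finset.card_range, hZn i]
        omega
      -- the three restricted arrays
      set X₂ : Arr q d := restrict hq0 Z Hset with hX₂def
      set W₁ : Arr q d := restrict hq0 Z U with hW₁def
      set Z'' : Arr q d := restrict hq0 Z Eset with hZ''def
      have hX₂size : X₂.size = fun _ => n := by
        funext i
        show (Hset i).card = n
        exact hHcard i
      have hembXW : Emb (fun _ => 1) X W₁ := by
        refine emb_into_restrict hq0 hUsub (fun i => by rw [hUcard i, hXn i]) hf1
          (fun i m hm => ?_) hf3
        simp only [hUdef]
        exact Finset.mem_insert.mpr (Or.inr (hFrmem i m (by rw [← hXn i]; exact hm)))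
      have hX₂sz : ∀ i, X₂.size i = (Hset i).card := fun i => rfl
      have hembX₂W : Emb (fun _ => 1) X₂ W₁ := by
        refine emb_into_restrict (f := fun i m => enumF (Hset i) m) hq0 hUsub
          (fun i => by rw [hUcard i, hX₂sz i, hHcard i])
          (fun i m₁ m₂ h hm₂ => enumF_strictMono (U := Hset i) h (by
            rw [hX₂sz i] at hm₂; exact hm₂))
          (fun i m hm => hHsubU i (enumF_mem (U := Hset i) (by
            rw [hX₂sz i] at hm; exact hm)))
          (fun x hx h' => restrict_val hq0 Z x hx h')
      have hembX₂Z'' : Emb (fun _ => t) X₂ Z'' := by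
        refine emb_into_restrict (f := fun i m => enumF (Hset i) m) hq0 hEsub
          (fun i => by rw [hEcard i, hX₂sz i, hHcard i])
          (fun i m₁ m₂ h hm₂ => enumF_strictMono (U := Hset i) h (by
            rw [hX₂sz i] at hm₂; exact hm₂))
          (fun i m hm => hHsubE i (enumF_mem (U := Hset i) (by
            rw [hX₂sz i] at hm; exact hm)))
          (fun x hx h' => restrict_val hq0 Z x hx h')
      have hembYZ'' : Emb (fun _ => t) Y Z'' := by
        refine emb_into_restrict hq0 hEsub (fun i => by rw [hEcard i, hYn i]) hg1
          (fun i m hm => hGsubE i (hGrmem i m (by rw [← hYn i]; exact hm))) hg3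
      obtain ⟨C, hC1, hC2, hC3, hC4⟩ := ih n X₂ Y Z'' hX₂size hY hembX₂Z'' hembYZ''
      refine ⟨fun j => if j ≤ 1 then X else C (j - 1), by
        beta_reduce
        rw [if_pos (le_refl 1)], ?_, ?_, ?_⟩
      · beta_reduce
        rw [if_neg (by omega)]
        simpa using hC2
      · intro i h2' ht'
        beta_reduce
        rw [if_neg (by omega)]
        rcases Nat.lt_or_ge (i - 1) 2 with h | h
        · have hi1 : i - 1 = 1 := by omega
          rw [hi1, hC1, hX₂size]
        · exact hC3 (i - 1) h (by omega)
      · intro i h1' ht'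
        by_cases hi1 : i = 1
        · subst hi1
          refine ⟨W₁, ?_, ?_⟩
          · beta_reduce
            rw [if_pos (le_refl 1)]
            exact emb_to_steps hembXW
          · beta_reduce
            rw [if_neg (by omega)]
            have h21 : (1 : ℕ) + 1 - 1 = 1 := rfl
            rw [h21, hC1]
            exact emb_to_steps hembX₂W
        · obtain ⟨W, hW1, hW2⟩ := hC4 (i - 1) (by omega) (by omega)
          refine ⟨W, ?_, ?_⟩
          · beta_reduce
            rw [if_neg (by omega)]
            exact hW1
          · beta_reduce
            rw [if_neg (by omega)]
            have hii : i + 1 - 1 = i - 1 + 1 := by omega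
            rw [hii]
            exact hW2

end Aux




/-- **Appendix Claim 5.** For `t ≥ 1` and arrays `X₁, X_{t+1} ∈ Σ_q^{n^{⊗d}}`,
`I_{t𝟏}(X₁) ∩ I_{t𝟏}(X_{t+1}) ≠ ∅` iff there exist `t − 1` arrays
`X₂, …, X_t ∈ Σ_q^{n^{⊗d}}` with `I_𝟏(X_i) ∩ I_𝟏(X_{i+1}) ≠ ∅` for all `1 ≤ i ≤ t`. -/
theorem statement16 (q d n t : ℕ) (hq : 2 ≤ q) (hd : 1 ≤ d) (ht : 1 ≤ t)
    (X₁ Xlast : Arr q d) (hX₁ : X₁ ∈ cube q d n) (hXlast : Xlast ∈ cube q d n) :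
    (insBall (fun _ => t) X₁ ∩ insBall (fun _ => t) Xlast).Nonempty ↔
    ∃ Z : ℕ → Arr q d, Z 1 = X₁ ∧ Z (t + 1) = Xlast ∧
      (∀ i, 2 ≤ i → i ≤ t → Z i ∈ cube q d n) ∧
      (∀ i, 1 ≤ i → i ≤ t →
        (insBall (fun _ => (1 : ℕ)) (Z i) ∩
          insBall (fun _ => (1 : ℕ)) (Z (i + 1))).Nonempty) := by
  have hq0 : 0 < q := by omega
  constructor
  · rintro ⟨W, hW1, hW2⟩
    obtain ⟨C, hC1, hC2, hC3, hC4⟩ := chain_of_common hq0 t n X₁ Xlast W hX₁ hXlast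
      (steps_to_emb hW1) (steps_to_emb hW2)
    refine ⟨C, hC1, hC2, fun i h2 ht' => hC3 i h2 ht', fun i h1 ht' => ?_⟩
    obtain ⟨V, hV1, hV2⟩ := hC4 i h1 ht'
    exact ⟨V, hV1, hV2⟩
  · rintro ⟨C, hC1, hC2, hC3, hC4⟩
    have key : ∀ i, 1 ≤ i → i ≤ t → ∃ V, Emb (fun _ => i) X₁ V ∧
        Emb (fun _ => i) (C (i + 1)) V := by
      intro i
      induction i with
      | zero => intro h; omega
      | succ i ih =>
          intro _ hle
          by_cases hi0 : i = 0
          · subst hi0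
            obtain ⟨V, hV1, hV2⟩ := hC4 1 (le_refl 1) hle
            rw [hC1] at hV1
            exact ⟨V, steps_to_emb hV1, steps_to_emb hV2⟩
          · obtain ⟨V, hV1, hV2⟩ := ih (by omega) (by omega)
            obtain ⟨W', hW'1, hW'2⟩ := hC4 (i + 1) (by omega) hle
            obtain ⟨V', hV'1, hV'2⟩ := merge hq0 hW'1 hV2
            refine ⟨V',
              emb_cast (emb_comp hV1 (steps_to_emb hV'1)) (funext fun _ => rfl),
              emb_cast (emb_comp (steps_to_emb hW'2) hV'2)
                (funext fun _ => Nat.add_comm 1 i)⟩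
    obtain ⟨V, hV1, hV2⟩ := key t ht (le_refl t)
    rw [hC2] at hV2
    exact ⟨V, emb_to_steps hV1, emb_to_steps hV2⟩
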